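/- arXiv:1711.03013 — 2 statements merged into one kernel-verified Lean document; each statement's English description precedes it below -/
import Mathlib

section
/- Let (A_t)_{t∈G} and (B_t)_{t∈G} be concrete Fell bundles over a group G in a C*-algebra L, and let (X_t)_{t∈G} be a concrete strong (A_t)–(B_t) equivalence bundle. Then for all r, s ∈ G one has A_r⋅X_s = X_r⋅B_s, i.e. the closed linear span of {a·x : a ∈ A_r, x ∈ X_s} equals the closed linear span of {x·b : x ∈ X_r, b ∈ B_s}. -/
/-- The closed linear span (over `ℂ`) of a set in a normed `ℂ`-algebra. -/
noncomputable def closedSpan {L : Type*} [NormedRing L] [NormedAlgebra ℂ L]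
    (S : Set L) : Submodule ℂ L :=
  (Submodule.span ℂ S).topologicalClosure

/-- `S⋅T`: the closed linear span of all products `s * t` with `s ∈ S`, `t ∈ T`. -/
noncomputable def mulSpan {L : Type*} [NormedRing L] [NormedAlgebra ℂ L]
    (S T : Set L) : Submodule ℂ L :=
  closedSpan (Set.image2 (· * ·) S T)

section Aux

variable {L : Type*} [NormedRing L] [NormedAlgebra ℂ L]

lemma aux_subset_closedSpan (S : Set L) : S ⊆ (closedSpan S : Set L) := fun _ hx =>
  Submodule.le_topologicalClosure _ (Submodule.subset_span hx)

lemma aux_closedSpan_le {S : Set L} {P : Submodule ℂ L} (h : S ⊆ P)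
    (hP : IsClosed (P : Set L)) : closedSpan S ≤ P :=
  Submodule.topologicalClosure_minimal _ (Submodule.span_le.mpr h) hP

lemma aux_isClosed_closedSpan (S : Set L) : IsClosed ((closedSpan S : Set L)) :=
  Submodule.isClosed_topologicalClosure _

lemma aux_isClosed_mulSpan (S T : Set L) : IsClosed ((mulSpan S T : Set L)) :=
  Submodule.isClosed_topologicalClosure _

lemma aux_mul_right_mem {S : Set L} {z : L} {P : Submodule ℂ L}
    (hP : IsClosed (P : Set L)) (h : ∀ s ∈ S, s * z ∈ P) :
    ∀ u ∈ closedSpan S, u * z ∈ P := by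
  intro u hu
  have hle : closedSpan S ≤ P.comap ((ContinuousLinearMap.mul ℂ L).flip z).toLinearMap := by
    apply Submodule.topologicalClosure_minimal
    · rw [Submodule.span_le]
      intro s hs
      exact h s hs
    · exact hP.preimage ((ContinuousLinearMap.mul ℂ L).flip z).continuous
  exact hle hu

lemma aux_mul_left_mem {S : Set L} {z : L} {P : Submodule ℂ L}
    (hP : IsClosed (P : Set L)) (h : ∀ s ∈ S, z * s ∈ P) :
    ∀ u ∈ closedSpan S, z * u ∈ P := by
  intro u hu
  have hle : closedSpan S ≤ P.comap (ContinuousLinearMap.mul ℂ L z).toLinearMap := by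
    apply Submodule.topologicalClosure_minimal
    · rw [Submodule.span_le]
      intro s hs
      exact h s hs
    · exact hP.preimage (ContinuousLinearMap.mul ℂ L z).continuous
  exact hle hu

end Aux

section Analytic

variable {L : Type*} [NormedRing L] [StarRing L] [CStarRing L]
    [NormedAlgebra ℂ L] [StarModule ℂ L] [CompleteSpace L]

lemma aux_elem_bound {s : ℝ} (h0 : 0 ≤ s) (h1 : s ≤ 1) (n : ℕ) :
    (n + 1 : ℝ) * ((1 - s) * s ^ n) ≤ 1 := by
  have key : (n + 1 : ℝ) * s ^ n ≤ ∑ i ∈ Finset.range (n + 1), s ^ i := by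
    have h : ∀ i ∈ Finset.range (n + 1), s ^ n ≤ s ^ i := fun i hi =>
      pow_le_pow_of_le_one h0 h1 (Nat.lt_succ_iff.mp (Finset.mem_range.mp hi))
    calc (n + 1 : ℝ) * s ^ n = ∑ _i ∈ Finset.range (n + 1), s ^ n := by
          simp [Finset.sum_const, mul_comm]
      _ ≤ _ := Finset.sum_le_sum h
  have geom : (1 - s) * ∑ i ∈ Finset.range (n + 1), s ^ i = 1 - s ^ (n + 1) := by
    have hg := geom_sum_mul (x := s) (n := n + 1)
    nlinarith [hg]
  nlinarith [pow_nonneg h0 n, pow_nonneg h0 (n + 1), sub_nonneg.mpr h1,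
    mul_le_mul_of_nonneg_left key (sub_nonneg.mpr h1)]

lemma aux_approx_left (a : L) {ε : ℝ} (hε : 0 < ε) :
    ∃ u : L, u ∈ Submodule.span ℂ {x : L | ∃ k : ℕ, x = (a * star a) ^ (k + 1)} ∧
      star u = u ∧ ‖a - u * a‖ < ε := by
  by_cases ha : a = 0
  · exact ⟨0, Submodule.zero_mem _, star_zero L, by simpa [ha]⟩
  letI : CStarAlgebra L := {}
  haveI : Nontrivial L := ⟨⟨a, 0, ha⟩⟩
  set S := Submodule.span ℂ {x : L | ∃ k : ℕ, x = (a * star a) ^ (k + 1)} with hS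
  set c := a * star a with hc
  set R := ‖c‖ with hRdef
  have hsa : IsSelfAdjoint c := IsSelfAdjoint.mul_star_self a
  have hR : 0 < R := by
    have h : ‖c‖ = ‖a‖ * ‖a‖ := CStarRing.norm_self_mul_star
    rw [hRdef, h]
    have := norm_pos_iff.mpr ha
    positivity
  obtain ⟨n, hn⟩ := exists_nat_gt (R / ε ^ 2)
  have hn' : R / (n + 1) < ε ^ 2 := by
    rw [div_lt_iff₀ (by positivity)] at hn ⊢
    nlinarith [sq_nonneg ε]
  set w : L := 1 - R⁻¹ • c with hw
  set v : L := w ^ n with hv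
  refine ⟨1 - v, ?_, ?_, ?_⟩
  · have hcS : c ∈ S := Submodule.subset_span ⟨0, by simp [hc]⟩
    have hmulc : ∀ x ∈ S, x * c ∈ S := by
      intro x hx
      induction hx using Submodule.span_induction with
      | mem y hy =>
        obtain ⟨k, rfl⟩ := hy
        exact Submodule.subset_span ⟨k + 1, by simp [hc, pow_succ, mul_assoc]⟩
      | zero => simpa using Submodule.zero_mem S
      | add y z _ _ h1 h2 => rw [add_mul]; exact Submodule.add_mem S h1 h2
      | smul t y _ h1 => rw [smul_mul_assoc]; exact Submodule.smul_mem S t h1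
    have key : ∀ m : ℕ, 1 - w ^ m ∈ S := by
      intro m
      induction m with
      | zero => simpa using Submodule.zero_mem S
      | succ m ih =>
        have hrw : 1 - w ^ (m + 1) =
            (1 - w ^ m) + (R⁻¹ • c - (1 - w ^ m) * (R⁻¹ • c)) := by
          rw [pow_succ, hw, mul_sub, mul_one, sub_mul, one_mul]
          abel
        rw [hrw]
        refine Submodule.add_mem S ih (Submodule.sub_mem S ?_ ?_)
        · exact Submodule.smul_of_tower_mem S R⁻¹ hcS
        · rw [mul_smul_comm]
          exact Submodule.smul_of_tower_mem S R⁻¹ (hmulc _ ih)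
    exact key n
  · have hwsa : star w = w := by
      rw [hw, star_sub, star_one, star_smul, hsa.star_eq, star_trivial]
    rw [star_sub, star_one, hv, star_pow, hwsa]
  · have hva : a - (1 - v) * a = v * a := by noncomm_ring
    rw [hva]
    have hsq : ‖v * a‖ * ‖v * a‖ = ‖v * c * v‖ := by
      have hvsa : star v = v := by
        rw [hv, star_pow, hw, star_sub, star_one, star_smul, hsa.star_eq, star_trivial]
      rw [← CStarRing.norm_self_mul_star (x := v * a)]
      congr 1
      rw [star_mul, hvsa, hc]
      noncomm_ring
    have e1 : cfc (fun t : ℝ => 1 - R⁻¹ * t) c = w := by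
      rw [cfc_sub _ _ c, cfc_const_mul _ _ c, cfc_id' ℝ c, cfc_const_one ℝ c]
    have e2 : cfc (fun t : ℝ => (1 - R⁻¹ * t) ^ n) c = v := by
      rw [cfc_pow _ _ c, e1]
    have e3 : v * c * v = cfc (fun t : ℝ => ((1 - R⁻¹ * t) ^ n * t) * (1 - R⁻¹ * t) ^ n) c := by
      rw [cfc_mul (fun t : ℝ => (1 - R⁻¹ * t) ^ n * t) (fun t : ℝ => (1 - R⁻¹ * t) ^ n) c,
        cfc_mul (fun t : ℝ => (1 - R⁻¹ * t) ^ n) (fun t : ℝ => t) c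
          ((continuous_const.sub (continuous_const.mul continuous_id)).pow n).continuousOn
          continuousOn_id, cfc_id' ℝ c, e2]
    have hspec : ∀ t ∈ spectrum ℝ c, 0 ≤ t ∧ t ≤ R := by
      intro t ht
      constructor
      · have h := spectrum_star_mul_self_nonneg (b := star a) (A := L)
        rw [star_star] at h
        exact h t ht
      · simpa using (Real.le_norm_self t).trans (spectrum.norm_le_norm_of_mem ht)
    have hb : ‖v * c * v‖ ≤ R / (n + 1) := by
      rw [e3]
      refine norm_cfc_le (by positivity) (fun t ht => ?_)
      obtain ⟨ht0, htR⟩ := hspec t ht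
      set s : ℝ := 1 - R⁻¹ * t with hs
      have hRt : R⁻¹ * t ≤ 1 := by
        have h := (div_le_one hR).mpr htR
        rwa [div_eq_inv_mul] at h
      have hs0 : 0 ≤ s := by rw [hs]; linarith
      have hs1 : s ≤ 1 := by
        rw [hs]
        have : 0 ≤ R⁻¹ * t := by positivity
        linarith
      have htq : t = R * (1 - s) := by
        rw [hs]
        field_simp
        ring
      have hsn0 : 0 ≤ s ^ n := pow_nonneg hs0 n
      have hsn1 : s ^ n ≤ 1 := pow_le_one₀ hs0 hs1
      rw [Real.norm_eq_abs, abs_of_nonneg (by positivity)]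
      have step1 : s ^ n * t * s ^ n ≤ t * s ^ n := by
        nlinarith [mul_nonneg ht0 hsn0]
      have step2 : t * s ^ n ≤ R / (n + 1) := by
        rw [le_div_iff₀ (by positivity)]
        calc t * s ^ n * (n + 1) = R * ((n + 1) * ((1 - s) * s ^ n)) := by rw [htq]; ring
          _ ≤ R * 1 := mul_le_mul_of_nonneg_left (aux_elem_bound hs0 hs1 n) hR.le
          _ = R := mul_one R
      linarith
    nlinarith [norm_nonneg (v * a), hsq, hb, hn', norm_nonneg (v * c * v)]

lemma aux_approx_right (b : L) {ε : ℝ} (hε : 0 < ε) :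
    ∃ u : L, u ∈ Submodule.span ℂ {x : L | ∃ k : ℕ, x = (star b * b) ^ (k + 1)} ∧
      star u = u ∧ ‖b - b * u‖ < ε := by
  obtain ⟨u, hu, hsu, hn⟩ := aux_approx_left (star b) hε
  rw [star_star] at hu
  refine ⟨u, hu, hsu, ?_⟩
  have h : b - b * u = star (star b - u * star b) := by
    rw [star_sub, star_mul, hsu, star_star]
  rw [h, norm_star]
  exact hn

end Analytic

/-- If `(X t)` is a concrete strong `(A t)`–`(B t)` equivalence bundle, then
`A r ⋅ X s = X r ⋅ B s` for all `r, s ∈ G`. -/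
theorem strongEquivalence_leftAct_eq_rightAct
    {G L : Type*} [Group G] [NormedRing L] [StarRing L] [CStarRing L]
    [NormedAlgebra ℂ L] [StarModule ℂ L] [CompleteSpace L]
    (A B X : G → Submodule ℂ L)
    (hAclosed : ∀ t : G, IsClosed (A t : Set L))
    (hAmul : ∀ r s : G, ∀ a ∈ A r, ∀ a' ∈ A s, a * a' ∈ A (r * s))
    (hAstar : ∀ t : G, ∀ a ∈ A t, star a ∈ A t⁻¹)
    (hBclosed : ∀ t : G, IsClosed (B t : Set L))
    (hBmul : ∀ r s : G, ∀ b ∈ B r, ∀ c ∈ B s, b * c ∈ B (r * s))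
    (hBstar : ∀ t : G, ∀ b ∈ B t, star b ∈ B t⁻¹)
    (hXclosed : ∀ t : G, IsClosed (X t : Set L))
    (hXactL : ∀ r s : G, ∀ a ∈ A r, ∀ x ∈ X s, a * x ∈ X (r * s))
    (hXactR : ∀ r s : G, ∀ x ∈ X r, ∀ b ∈ B s, x * b ∈ X (r * s))
    (hXinnerR : ∀ r s : G, ∀ x ∈ X r, ∀ y ∈ X s, star x * y ∈ B (r⁻¹ * s))
    (hXinnerL : ∀ r s : G, ∀ x ∈ X r, ∀ y ∈ X s, x * star y ∈ A (r * s⁻¹))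
    (hsfullR : ∀ t : G,
      mulSpan (star '' (X t : Set L)) (X t : Set L)
        = mulSpan (star '' (B t : Set L)) (B t : Set L))
    (hsfullL : ∀ t : G,
      mulSpan (X t : Set L) (star '' (X t : Set L))
        = mulSpan (A t : Set L) (star '' (A t : Set L))) :
    ∀ r s : G,
      mulSpan (A r : Set L) (X s : Set L) = mulSpan (X r : Set L) (B s : Set L) := by
  intro r s
  apply le_antisymm
  · -- A r ⋅ X s ≤ X r ⋅ B s
    refine aux_closedSpan_le ?_ (aux_isClosed_mulSpan _ _)
    rintro _ ⟨a, ha, x, hx, rfl⟩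
    -- show a * x ∈ mulSpan (X r) (B s)
    have hP : IsClosed ((mulSpan (X r : Set L) (B s : Set L) : Set L)) :=
      aux_isClosed_mulSpan _ _
    rw [SetLike.mem_coe, ← SetLike.mem_coe, ← hP.closure_eq, Metric.mem_closure_iff]
    intro ε hε
    have hδ : 0 < ε / (‖x‖ + 1) := by positivity
    obtain ⟨u, huS, hsu, hun⟩ := aux_approx_left a hδ
    -- u lies in A r ⋅ (A r)* = X r ⋅ (X r)*
    have hgen : ∀ k : ℕ, (a * star a) ^ (k + 1)
        ∈ mulSpan (A r : Set L) (star '' (A r : Set L)) := by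
      intro k
      induction k with
      | zero =>
        rw [pow_one]
        exact aux_subset_closedSpan _ ⟨a, ha, star a, ⟨a, ha, rfl⟩, rfl⟩
      | succ k ih =>
        rw [pow_succ]
        refine aux_mul_right_mem (aux_isClosed_mulSpan _ _) ?_ _ ih
        rintro _ ⟨a1, ha1, _, ⟨a2, ha2, rfl⟩, rfl⟩
        have h1 : a1 * (star a2 * a) ∈ A r := by
          have := hAmul r (r⁻¹ * r) a1 ha1 (star a2 * a)
            (hAmul r⁻¹ r (star a2) (hAstar r a2 ha2) a ha)
          rwa [mul_inv_cancel_left] at this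
        have heq : a1 * star a2 * (a * star a) = (a1 * (star a2 * a)) * star a := by
          noncomm_ring
        rw [heq]
        exact aux_subset_closedSpan _ ⟨_, h1, star a, ⟨a, ha, rfl⟩, rfl⟩
    have hu_EA : u ∈ mulSpan (A r : Set L) (star '' (A r : Set L)) := by
      refine Submodule.span_le.mpr ?_ huS
      rintro _ ⟨k, rfl⟩
      exact hgen k
    have hu_EX : u ∈ mulSpan (X r : Set L) (star '' (X r : Set L)) := by
      rw [hsfullL r]
      exact hu_EA
    have hmem : u * (a * x) ∈ mulSpan (X r : Set L) (B s : Set L) := by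
      refine aux_mul_right_mem hP ?_ _ hu_EX
      rintro _ ⟨x1, hx1, _, ⟨y1, hy1, rfl⟩, rfl⟩
      have hax : a * x ∈ X (r * s) := hXactL r s a ha x hx
      have hb : star y1 * (a * x) ∈ B s := by
        have := hXinnerR r (r * s) y1 hy1 (a * x) hax
        rwa [inv_mul_cancel_left] at this
      have heq : x1 * star y1 * (a * x) = x1 * (star y1 * (a * x)) := by
        rw [mul_assoc]
      rw [heq]
      exact aux_subset_closedSpan _ ⟨x1, hx1, _, hb, rfl⟩
    refine ⟨u * (a * x), hmem, ?_⟩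
    rw [dist_eq_norm]
    have heq2 : a * x - u * (a * x) = (a - u * a) * x := by noncomm_ring
    rw [heq2]
    calc ‖(a - u * a) * x‖ ≤ ‖a - u * a‖ * ‖x‖ := norm_mul_le _ _
      _ < ε := by
        have hx1 : ‖x‖ ≤ ‖x‖ + 1 := by linarith
        have := mul_le_mul_of_nonneg_left hx1 (norm_nonneg (a - u * a))
        have h2 : ‖a - u * a‖ * (‖x‖ + 1) < (ε / (‖x‖ + 1)) * (‖x‖ + 1) := by
          apply mul_lt_mul_of_pos_right hun
          positivity
        rw [div_mul_cancel₀] at h2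
        · linarith
        · positivity
  · -- X r ⋅ B s ≤ A r ⋅ X s
    refine aux_closedSpan_le ?_ (aux_isClosed_mulSpan _ _)
    rintro _ ⟨x, hx, b, hb, rfl⟩
    have hP : IsClosed ((mulSpan (A r : Set L) (X s : Set L) : Set L)) :=
      aux_isClosed_mulSpan _ _
    rw [SetLike.mem_coe, ← SetLike.mem_coe, ← hP.closure_eq, Metric.mem_closure_iff]
    intro ε hε
    have hδ : 0 < ε / (‖x‖ + 1) := by positivity
    obtain ⟨u, huS, hsu, hun⟩ := aux_approx_right b hδ
    have hgen : ∀ k : ℕ, (star b * b) ^ (k + 1)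
        ∈ mulSpan (star '' (B s : Set L)) (B s : Set L) := by
      intro k
      induction k with
      | zero =>
        rw [pow_one]
        exact aux_subset_closedSpan _ ⟨star b, ⟨b, hb, rfl⟩, b, hb, rfl⟩
      | succ k ih =>
        rw [pow_succ']
        refine aux_mul_left_mem (aux_isClosed_mulSpan _ _) ?_ _ ih
        rintro _ ⟨_, ⟨b1, hb1, rfl⟩, b2, hb2, rfl⟩
        have h1 : b * star b1 * b2 ∈ B s := by
          have := hBmul (s * s⁻¹) s (b * star b1)
            (hBmul s s⁻¹ b hb (star b1) (hBstar s b1 hb1)) b2 hb2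
          rwa [mul_inv_cancel, one_mul] at this
        have heq : star b * b * (star b1 * b2) = star b * (b * star b1 * b2) := by
          noncomm_ring
        rw [heq]
        exact aux_subset_closedSpan _ ⟨star b, ⟨b, hb, rfl⟩, _, h1, rfl⟩
    have hu_FB : u ∈ mulSpan (star '' (B s : Set L)) (B s : Set L) := by
      refine Submodule.span_le.mpr ?_ huS
      rintro _ ⟨k, rfl⟩
      exact hgen k
    have hu_FX : u ∈ mulSpan (star '' (X s : Set L)) (X s : Set L) := by
      rw [hsfullR s]
      exact hu_FB
    have hmem : (x * b) * u ∈ mulSpan (A r : Set L) (X s : Set L) := by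
      refine aux_mul_left_mem hP ?_ _ hu_FX
      rintro _ ⟨_, ⟨y1, hy1, rfl⟩, y2, hy2, rfl⟩
      have hxb : x * b ∈ X (r * s) := hXactR r s x hx b hb
      have ha1 : (x * b) * star y1 ∈ A r := by
        have := hXinnerL (r * s) s (x * b) hxb y1 hy1
        rwa [mul_inv_cancel_right] at this
      have heq : x * b * (star y1 * y2) = ((x * b) * star y1) * y2 := by
        noncomm_ring
      rw [heq]
      exact aux_subset_closedSpan _ ⟨_, ha1, y2, hy2, rfl⟩
    refine ⟨(x * b) * u, hmem, ?_⟩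
    rw [dist_eq_norm]
    have heq2 : x * b - x * b * u = x * (b - b * u) := by noncomm_ring
    rw [heq2]
    calc ‖x * (b - b * u)‖ ≤ ‖x‖ * ‖b - b * u‖ := norm_mul_le _ _
      _ < ε := by
        have h2 : (‖x‖ + 1) * ‖b - b * u‖ < (‖x‖ + 1) * (ε / (‖x‖ + 1)) := by
          apply mul_lt_mul_of_pos_left hun
          positivity
        rw [mul_div_cancel₀] at h2
        · nlinarith [norm_nonneg (b - b * u), norm_nonneg x]
        · positivity
end

section
/- Let (B_t)_{t∈G} be a concrete Fell bundle over a group G in a C*-algebra L. For r, s ∈ G set J_{r,s} := (B_r⋅B_s)⋅(B_r⋅B_s)*. Then B_r⋅B_s = J_{r,s}⋅B_{rs} = B_{rs}⋅J_{s⁻¹,r⁻¹}, where J_{s⁻¹,r⁻¹} = (B_{s⁻¹}⋅B_{r⁻¹})⋅(B_{s⁻¹}⋅B_{r⁻¹})*. -/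
section Toolkit

variable {L : Type*} [NormedRing L] [NormedAlgebra ℂ L]

lemma mem_closedSpan {S : Set L} {x : L} (hx : x ∈ S) : x ∈ closedSpan S :=
  Submodule.le_topologicalClosure _ (Submodule.subset_span hx)

lemma closedSpan_isClosed (S : Set L) : IsClosed (closedSpan S : Set L) :=
  Submodule.isClosed_topologicalClosure _

lemma closedSpan_le {S : Set L} {N : Submodule ℂ L} (hN : IsClosed (N : Set L))
    (h : S ⊆ N) : closedSpan S ≤ N :=
  Submodule.topologicalClosure_minimal _ (Submodule.span_le.mpr h) hN

lemma mem_mulSpan {S T : Set L} {u v : L} (hu : u ∈ S) (hv : v ∈ T) :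
    u * v ∈ mulSpan S T := mem_closedSpan (Set.mem_image2_of_mem hu hv)

lemma mulSpan_isClosed (S T : Set L) : IsClosed (mulSpan S T : Set L) :=
  closedSpan_isClosed _

lemma mulSpan_le {S T : Set L} {N : Submodule ℂ L} (hN : IsClosed (N : Set L))
    (h : ∀ u ∈ S, ∀ v ∈ T, u * v ∈ N) : mulSpan S T ≤ N :=
  closedSpan_le hN (Set.image2_subset_iff.mpr h)

lemma clm_closedSpan {S : Set L} {N : Submodule ℂ L} (hN : IsClosed (N : Set L))
    (f : L →L[ℂ] L) (h : ∀ u ∈ S, f u ∈ N) {x : L} (hx : x ∈ closedSpan S) :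
    f x ∈ N := by
  have hle : closedSpan S ≤ N.comap (f : L →ₗ[ℂ] L) := by
    refine Submodule.topologicalClosure_minimal _ (Submodule.span_le.mpr h) ?_
    exact hN.preimage f.continuous
  exact hle hx

lemma star_clm_closedSpan [StarRing L] [CStarRing L] [StarModule ℂ L]
    {S : Set L} {N : Submodule ℂ L}
    (hN : IsClosed (N : Set L)) (f : L →L[ℂ] L) (h : ∀ u ∈ S, f (star u) ∈ N)
    {x : L} (hx : x ∈ closedSpan S) : f (star x) ∈ N := by
  let Q : Submodule ℂ L :=
    { carrier := {y | f (star y) ∈ N}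
      add_mem' := fun {a b} ha hb => by
        simp only [Set.mem_setOf_eq, star_add, map_add] at *
        exact N.add_mem ha hb
      zero_mem' := by simp
      smul_mem' := fun c y hy => by
        simp only [Set.mem_setOf_eq, star_smul, map_smul] at *
        exact N.smul_mem _ hy }
  have hQ : IsClosed (Q : Set L) := hN.preimage (f.continuous.comp continuous_star)
  exact closedSpan_le hQ h hx

end Toolkit

section Approx

variable {L : Type*} [NormedRing L] [NormedAlgebra ℂ L]

/-- Auxiliary element `b = K⁻¹ • a²` with `K = ‖a‖² + 1`. -/
noncomputable def bbA (a : L) : L := (((‖a‖ ^ 2 + 1 : ℝ) : ℂ))⁻¹ • a ^ 2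

/-- Partial geometric sums of `(1 - bbA a)`. -/
noncomputable def ccA (a : L) (n : ℕ) : L := ∑ k ∈ Finset.range n, (1 - bbA a) ^ k

lemma bbA_mem {E : Submodule ℂ L} (hE : ∀ p ∈ E, ∀ q ∈ E, p * q ∈ E)
    {a : L} (ha : a ∈ E) : bbA a ∈ E :=
  Submodule.smul_mem _ _ (by simpa [sq] using hE a ha a ha)

lemma mul_ccA_mem {E : Submodule ℂ L} (hE : ∀ p ∈ E, ∀ q ∈ E, p * q ∈ E)
    {a : L} (ha : a ∈ E) (n : ℕ) : a * ccA a n ∈ E := by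
  have hb : bbA a ∈ E := bbA_mem hE ha
  have key : ∀ m : ℕ, a * (1 - bbA a) ^ m ∈ E := by
    intro m
    induction m with
    | zero => simpa using ha
    | succ m ih =>
        have : a * (1 - bbA a) ^ (m + 1)
            = a * (1 - bbA a) ^ m - (a * (1 - bbA a) ^ m) * bbA a := by
          rw [pow_succ, ← mul_assoc, mul_sub, mul_one]
        rw [this]
        exact E.sub_mem ih (hE _ ih _ hb)
  simpa [ccA, Finset.mul_sum] using Submodule.sum_mem E (fun k _ => key k)

lemma commute_ccA (a : L) (n : ℕ) : Commute a (ccA a n) := by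
  have hb : Commute a (bbA a) := ((Commute.refl a).pow_right 2).smul_right _
  exact Commute.sum_right _ _ _ fun k _ =>
    (((Commute.one_right a).sub_right hb).pow_right k)

/-- The elementary real inequality behind the approximation argument. -/
lemma real_bound {K : ℝ} (hK : 1 ≤ K) {t : ℝ} (ht : 0 ≤ t) (ht2 : t ^ 2 < K)
    {n : ℕ} (hn : 1 ≤ n) :
    t * (1 - t ^ 2 / K) ^ (2 * n) ≤ Real.sqrt K / Real.sqrt n := by
  have hK0 : (0 : ℝ) < K := by linarith
  set s : ℝ := t ^ 2 / K with hs
  have hs0 : 0 ≤ s := div_nonneg (sq_nonneg t) hK0.le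
  have hs1 : s < 1 := (div_lt_one hK0).mpr ht2
  have hRHS0 : 0 ≤ Real.sqrt K / Real.sqrt n :=
    div_nonneg (Real.sqrt_nonneg _) (Real.sqrt_nonneg _)
  rcases eq_or_lt_of_le ht with h0 | ht0
  · simp [← h0]
    exact hRHS0
  -- step 1 : (1-s)^(2n) * (1 + 2n*s) ≤ 1
  have hbern : (1 : ℝ) + (2 * n : ℕ) * s ≤ (1 + s) ^ (2 * n) :=
    one_add_mul_le_pow (by linarith) (2 * n)
  have hpow0 : (0 : ℝ) ≤ (1 - s) ^ (2 * n) := pow_nonneg (by linarith) _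
  have hstep1 : (1 - s) ^ (2 * n) * (1 + (2 * n : ℕ) * s) ≤ 1 := by
    calc (1 - s) ^ (2 * n) * (1 + (2 * n : ℕ) * s)
        ≤ (1 - s) ^ (2 * n) * (1 + s) ^ (2 * n) :=
          mul_le_mul_of_nonneg_left hbern hpow0
      _ = ((1 - s) * (1 + s)) ^ (2 * n) := (mul_pow _ _ _).symm
      _ = (1 - s ^ 2) ^ (2 * n) := by ring_nf
      _ ≤ 1 := pow_le_one₀ (by nlinarith) (by nlinarith)
  have hden0 : (0 : ℝ) < 1 + (2 * n : ℕ) * s := by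
    have : (0 : ℝ) ≤ (2 * n : ℕ) * s := mul_nonneg (by positivity) hs0
    linarith
  -- step 2 : t * (1-s)^(2n) ≤ t / (1 + 2n s)
  have hstep2 : t * (1 - s) ^ (2 * n) ≤ t / (1 + (2 * n : ℕ) * s) := by
    rw [le_div_iff₀ hden0]
    calc t * (1 - s) ^ (2 * n) * (1 + (2 * n : ℕ) * s)
        = t * ((1 - s) ^ (2 * n) * (1 + (2 * n : ℕ) * s)) := by ring
      _ ≤ t * 1 := mul_le_mul_of_nonneg_left hstep1 ht0.le
      _ = t := mul_one t
  -- step 3 : t / (1 + 2n s) ≤ √K / √n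
  have hsq : Real.sqrt (n * s) ≤ 1 + (2 * n : ℕ) * s := by
    rw [Real.sqrt_le_left]
    · push_cast
      nlinarith [mul_nonneg (Nat.cast_nonneg (α := ℝ) n) hs0, sq_nonneg (n * s),
        sq_nonneg (1 - n * s)]
    · exact hden0.le
  have htns : t * Real.sqrt n = Real.sqrt K * Real.sqrt (n * s) := by
    have h1 : Real.sqrt (K * (n * s)) = Real.sqrt K * Real.sqrt (n * s) :=
      Real.sqrt_mul hK0.le _
    have h2 : K * (n * s) = t ^ 2 * n := by
      field_simp [hs]
      rw [hs]; field_simp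
    rw [← h1, h2, Real.sqrt_mul (sq_nonneg t), Real.sqrt_sq ht]
  have hn0 : (0 : ℝ) < Real.sqrt n := by
    have : (0 : ℝ) < (n : ℝ) := by exact_mod_cast hn
    exact Real.sqrt_pos.mpr this
  have hstep3 : t / (1 + (2 * n : ℕ) * s) ≤ Real.sqrt K / Real.sqrt n := by
    rw [div_le_div_iff₀ hden0 hn0]
    calc t * Real.sqrt n = Real.sqrt K * Real.sqrt (n * s) := htns
      _ ≤ Real.sqrt K * (1 + (2 * n : ℕ) * s) :=
          mul_le_mul_of_nonneg_left hsq (Real.sqrt_nonneg _)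
  exact le_trans hstep2 hstep3

variable [StarRing L] [CStarRing L] [StarModule ℂ L] [CompleteSpace L]

/-- The key approximation lemma: `x` lies in any closed submodule containing the
elements `x a (a ⬝ ccA a n)` with `a = x* x`. -/
lemma cstar_approx (x : L) (N : Submodule ℂ L) (hN : IsClosed (N : Set L))
    (h : ∀ n : ℕ,
      x * (star x * x * (star x * x * ccA (star x * x) n)) ∈ N) :
    x ∈ N := by
  obtain hL | hL := subsingleton_or_nontrivial L
  · simpa [Subsingleton.elim x 0] using N.zero_mem
  letI : CStarAlgebra L :=
    { ‹NormedRing L›, ‹StarRing L›, ‹CStarRing L›, ‹NormedAlgebra ℂ L›,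
      ‹StarModule ℂ L›, ‹CompleteSpace L› with }
  set a : L := star x * x with ha_def
  have ha : IsSelfAdjoint a := IsSelfAdjoint.star_mul_self x
  set K : ℝ := ‖a‖ ^ 2 + 1 with hK_def
  have hK1 : (1 : ℝ) ≤ K := by nlinarith [sq_nonneg ‖a‖, hK_def]
  have hK0 : (0 : ℝ) < K := by linarith
  have hKc : ((K : ℂ)) ≠ 0 := by exact_mod_cast hK0.ne'
  set b : L := bbA a with hb_def
  have hb_eq : b = ((K : ℂ))⁻¹ • a ^ 2 := rfl
  -- b * ccA a n = 1 - (1-b)^n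
  have hgeom : ∀ n : ℕ, b * ccA a n = 1 - (1 - b) ^ n := by
    intro n
    have := mul_geom_sum (1 - b) n
    have h' : (-b) * ccA a n = (1 - b) ^ n - 1 := by
      simpa [ccA, ← hb_def] using this
    have := congrArg Neg.neg h'
    simpa [neg_mul, neg_sub] using this
  -- a ^ 2 * ccA a n = K • (1 - (1-b)^n)
  have ha2b : a ^ 2 = (K : ℂ) • b := by
    rw [hb_eq, smul_smul, mul_inv_cancel₀ hKc, one_smul]
  have hmemN : ∀ n : ℕ, x - x * (1 - b) ^ n ∈ N := by
    intro n
    have hx : x * (a * (a * ccA a n)) ∈ N := h n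
    have heq : x * (a * (a * ccA a n)) = (K : ℂ) • (x - x * (1 - b) ^ n) := by
      have h1 : a * (a * ccA a n) = a ^ 2 * ccA a n := by
        rw [sq]; exact (mul_assoc a a _).symm
      rw [h1, ha2b, smul_mul_assoc, hgeom n, mul_smul_comm, mul_sub, mul_one]
    rw [heq] at hx
    have := N.smul_mem ((K : ℂ))⁻¹ hx
    rwa [smul_smul, inv_mul_cancel₀ hKc, one_smul] at this
  -- selfadjointness facts
  have hKsa : star ((K : ℂ))⁻¹ = ((K : ℂ))⁻¹ := by
    rw [← Complex.ofReal_inv, Complex.star_def, Complex.conj_ofReal]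
  have hb_sa : IsSelfAdjoint b := by
    rw [hb_eq]
    exact IsSelfAdjoint.smul hKsa (ha.pow 2)
  have hv_sa : ∀ n : ℕ, IsSelfAdjoint ((1 - b) ^ n) := fun n =>
    ((IsSelfAdjoint.one (R := L)).sub hb_sa).pow n
  -- cfc representation
  have hbcfc : cfc (fun t : ℝ => K⁻¹ * t ^ 2) a = b := by
    rw [cfc_const_mul _ _ a, cfc_pow_id a 2, hb_eq,
      ← Complex.ofReal_inv, Complex.coe_smul]
  have h1bcfc : cfc (fun t : ℝ => 1 - K⁻¹ * t ^ 2) a = 1 - b := by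
    rw [cfc_sub _ _ a, hbcfc, cfc_const (1 : ℝ) a, map_one]
  have hvcfc : ∀ n : ℕ,
      cfc (fun t : ℝ => (1 - K⁻¹ * t ^ 2) ^ n) a = (1 - b) ^ n := by
    intro n
    rw [cfc_pow _ n a, h1bcfc]
  have hvav : ∀ n : ℕ,
      cfc (fun t : ℝ => (1 - K⁻¹ * t ^ 2) ^ n * (t * (1 - K⁻¹ * t ^ 2) ^ n)) a
        = (1 - b) ^ n * (a * (1 - b) ^ n) := by
    intro n
    rw [cfc_mul (fun t : ℝ => (1 - K⁻¹ * t ^ 2) ^ n) (fun t : ℝ => t * (1 - K⁻¹ * t ^ 2) ^ n) a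
      (by fun_prop) (by fun_prop),
      cfc_mul (fun t : ℝ => t) (fun t : ℝ => (1 - K⁻¹ * t ^ 2) ^ n) a (by fun_prop) (by fun_prop),
      cfc_id' ℝ a, hvcfc n]
  -- spectrum facts
  have hspec : ∀ t ∈ spectrum ℝ a, 0 ≤ t ∧ t ^ 2 < K := by
    intro t ht
    have ht0 : 0 ≤ t := spectrum_star_mul_self_nonneg t ht
    have htn : ‖t‖ ≤ ‖a‖ := spectrum.norm_le_norm_of_mem ht
    rw [Real.norm_eq_abs, abs_of_nonneg ht0] at htn
    constructor
    · exact ht0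
    · nlinarith [norm_nonneg a]
  -- norm bound
  have hbound : ∀ n : ℕ, 1 ≤ n → ‖(1 - b) ^ n * (a * (1 - b) ^ n)‖
      ≤ Real.sqrt K / Real.sqrt n := by
    intro n hn
    rw [← hvav n]
    refine norm_cfc_le (div_nonneg (Real.sqrt_nonneg _) (Real.sqrt_nonneg _)) ?_
    intro t ht
    obtain ⟨ht0, htK⟩ := hspec t ht
    have hft : (0 : ℝ) ≤ 1 - K⁻¹ * t ^ 2 := by
      have : K⁻¹ * t ^ 2 ≤ 1 := by
        rw [inv_mul_le_iff₀ hK0, mul_one]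
        exact htK.le
      linarith
    have heqf : (1 - K⁻¹ * t ^ 2) ^ n * (t * (1 - K⁻¹ * t ^ 2) ^ n)
        = t * (1 - t ^ 2 / K) ^ (2 * n) := by
      rw [div_eq_inv_mul, two_mul, pow_add]
      ring
    rw [heqf, Real.norm_eq_abs, abs_of_nonneg
      (mul_nonneg ht0 (pow_nonneg (by rw [div_eq_inv_mul]; linarith) _))]
    exact real_bound hK1 ht0 htK hn
  -- norm of x * (1-b)^n
  have hxnorm : ∀ n : ℕ, ‖x * (1 - b) ^ n‖
      = Real.sqrt ‖(1 - b) ^ n * (a * (1 - b) ^ n)‖ := by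
    intro n
    have hstar : star (x * (1 - b) ^ n) * (x * (1 - b) ^ n)
        = (1 - b) ^ n * (a * (1 - b) ^ n) := by
      rw [star_mul, (hv_sa n).star_eq, ha_def]
      simp only [mul_assoc]
    rw [← hstar, CStarRing.norm_star_mul_self]
    rw [Real.sqrt_mul_self (norm_nonneg _)]
  -- convergence
  have htend0 : Filter.Tendsto (fun n : ℕ => x * (1 - b) ^ n) Filter.atTop (nhds 0) := by
    rw [tendsto_zero_iff_norm_tendsto_zero]
    have haux : Filter.Tendsto (fun n : ℕ => Real.sqrt (Real.sqrt (K / n)))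
        Filter.atTop (nhds 0) := by
      have h1 : Filter.Tendsto (fun n : ℕ => K / (n : ℝ)) Filter.atTop (nhds 0) :=
        tendsto_const_div_atTop_nhds_zero_nat K
      have h2 := (Real.continuous_sqrt.tendsto' 0 0 Real.sqrt_zero).comp h1
      exact (Real.continuous_sqrt.tendsto' 0 0 Real.sqrt_zero).comp h2
    refine squeeze_zero' (Filter.Eventually.of_forall fun n => norm_nonneg _) ?_ haux
    refine Filter.eventually_atTop.mpr ⟨1, fun n hn => ?_⟩
    rw [hxnorm n]
    have : ‖(1 - b) ^ n * (a * (1 - b) ^ n)‖ ≤ Real.sqrt (K / n) := by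
      rw [Real.sqrt_div hK0.le]
      exact hbound n hn
    exact Real.sqrt_le_sqrt this
  have htend : Filter.Tendsto (fun n : ℕ => x - x * (1 - b) ^ n)
      Filter.atTop (nhds x) := by
    have := Filter.Tendsto.sub (tendsto_const_nhds (x := x)
      (f := Filter.atTop (α := ℕ))) htend0
    simpa using this
  exact hN.mem_of_tendsto htend (Filter.Eventually.of_forall hmemN)

end Approx

/-- For a concrete Fell bundle `(B t)` and `J r s := (B r ⋅ B s) ⋅ (B r ⋅ B s)*`, one has
`B r ⋅ B s = J r s ⋅ B (r*s) = B (r*s) ⋅ J s⁻¹ r⁻¹`. -/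
theorem fellBundle_mulSpan_eq_ideal_mul
    {G L : Type*} [Group G] [NormedRing L] [StarRing L] [CStarRing L]
    [NormedAlgebra ℂ L] [StarModule ℂ L] [CompleteSpace L]
    (B : G → Submodule ℂ L)
    (hclosed : ∀ t : G, IsClosed (B t : Set L))
    (hmul : ∀ r s : G, ∀ b ∈ B r, ∀ c ∈ B s, b * c ∈ B (r * s))
    (hstar : ∀ t : G, ∀ b ∈ B t, star b ∈ B t⁻¹)
    (J : G → G → Submodule ℂ L)
    (hJ : ∀ r s : G, J r s
      = mulSpan (mulSpan (B r : Set L) (B s : Set L) : Set L)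
          (star '' (mulSpan (B r : Set L) (B s : Set L) : Set L))) :
    ∀ r s : G,
      mulSpan (B r : Set L) (B s : Set L)
          = mulSpan (J r s : Set L) (B (r * s) : Set L)
        ∧ mulSpan (B r : Set L) (B s : Set L)
          = mulSpan (B (r * s) : Set L) (J s⁻¹ r⁻¹ : Set L) := by
  -- multiplication in the unit fiber
  have hBe : ∀ p ∈ B (1 : G), ∀ q ∈ B (1 : G), p * q ∈ B (1 : G) := by
    intro p hp q hq
    simpa using hmul 1 1 p hp q hq
  intro r s
  set X : Submodule ℂ L := mulSpan (B r : Set L) (B s : Set L) with hX_def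
  set Y : Submodule ℂ L := mulSpan (B s⁻¹ : Set L) (B r⁻¹ : Set L) with hY_def
  have hXle : X ≤ B (r * s) := mulSpan_le (hclosed _) (hmul r s)
  have hYle : Y ≤ B (s⁻¹ * r⁻¹) := mulSpan_le (hclosed _) (hmul s⁻¹ r⁻¹)
  -- star of X lands in Y
  have hstarX : ∀ x ∈ X, star x ∈ Y := by
    intro x hx
    refine star_clm_closedSpan (N := Y) (mulSpan_isClosed _ _)
      (ContinuousLinearMap.id ℂ L) ?_ hx
    rintro u ⟨p, hp, q, hq, rfl⟩
    simp only [ContinuousLinearMap.id_apply, star_mul]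
    exact mem_mulSpan (hstar s q hq) (hstar r p hp)
  -- a = star x * x lands in the unit fiber, for x ∈ X
  have haBe : ∀ x ∈ X, star x * x ∈ B (1 : G) := by
    intro x hx
    have h1 : star x ∈ B (r * s)⁻¹ := hstar (r * s) x (hXle hx)
    have := hmul (r * s)⁻¹ (r * s) _ h1 x (hXle hx)
    rwa [inv_mul_cancel] at this
  constructor
  · -- first equality
    apply le_antisymm
    · -- X ≤ J r s ⋅ B (r*s)
      intro x hx
      apply cstar_approx x _ (mulSpan_isClosed _ _)
      intro n
      have hacc : star x * x * ccA (star x * x) n ∈ B (1 : G) :=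
        mul_ccA_mem hBe (haBe x hx) n
      have h2 : x * (star x * x * ccA (star x * x) n) ∈ B (r * s) := by
        simpa using hmul (r * s) 1 x (hXle hx) _ hacc
      have h1 : x * star x ∈ J r s := by
        rw [hJ r s]
        exact mem_mulSpan hx (Set.mem_image_of_mem _ hx)
      simpa only [mul_assoc] using
        mem_mulSpan (S := (J r s : Set L)) (T := (B (r * s) : Set L)) h1 h2
    · -- J r s ⋅ B (r*s) ≤ X
      refine mulSpan_le (mulSpan_isClosed _ _) ?_
      intro u hu v hv
      rw [hJ r s] at hu
      have hu' : u ∈ closedSpan (Set.image2 (· * ·) (X : Set L)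
          (star '' (X : Set L))) := hu
      have := clm_closedSpan (N := X) (mulSpan_isClosed _ _)
        ((ContinuousLinearMap.mul ℂ L).flip v) ?_ hu'
      · simpa using this
      rintro w ⟨p, hp, q, ⟨y, hy, rfl⟩, rfl⟩
      simp only [ContinuousLinearMap.flip_apply, ContinuousLinearMap.mul_apply']
      -- goal : (p * star y) * v ∈ X, with p y ∈ X
      have hp' : p ∈ closedSpan (Set.image2 (· * ·) (B r : Set L) (B s : Set L)) := hp
      have := clm_closedSpan (N := X) (mulSpan_isClosed _ _)
        ((ContinuousLinearMap.mul ℂ L).flip (star y * v)) ?_ hp'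
      · simpa only [ContinuousLinearMap.flip_apply, ContinuousLinearMap.mul_apply',
          mul_assoc] using this
      rintro w ⟨b1, hb1, b2, hb2, rfl⟩
      simp only [ContinuousLinearMap.flip_apply, ContinuousLinearMap.mul_apply']
      -- goal : (b1 * b2) * (star y * v) ∈ X, with y ∈ X
      have hy' : y ∈ closedSpan (Set.image2 (· * ·) (B r : Set L) (B s : Set L)) := hy
      have := star_clm_closedSpan (N := X) (mulSpan_isClosed _ _)
        ((ContinuousLinearMap.mul ℂ L (b1 * b2)).comp
          ((ContinuousLinearMap.mul ℂ L).flip v)) ?_ hy'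
      · simpa only [ContinuousLinearMap.comp_apply, ContinuousLinearMap.flip_apply,
          ContinuousLinearMap.mul_apply'] using this
      rintro w ⟨c1, hc1, c2, hc2, rfl⟩
      simp only [ContinuousLinearMap.comp_apply, ContinuousLinearMap.flip_apply,
        ContinuousLinearMap.mul_apply', star_mul]
      -- goal : (b1 * b2) * ((star c2 * star c1) * v) ∈ X
      have m1 : star c2 ∈ B s⁻¹ := hstar s c2 hc2
      have m2 : star c1 ∈ B r⁻¹ := hstar r c1 hc1
      have hin : b2 * (star c2 * (star c1 * v)) ∈ B s := by
        have t1 := hmul r⁻¹ (r * s) _ m2 v hv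
        have t2 := hmul s⁻¹ (r⁻¹ * (r * s)) _ m1 _ t1
        have t3 := hmul s (s⁻¹ * (r⁻¹ * (r * s))) _ hb2 _ t2
        rwa [show s * (s⁻¹ * (r⁻¹ * (r * s))) = s by group] at t3
      have := mem_mulSpan (S := (B r : Set L)) (T := (B s : Set L)) hb1 hin
      simpa only [mul_assoc] using this
  · -- second equality
    apply le_antisymm
    · -- X ≤ B (r*s) ⋅ J s⁻¹ r⁻¹
      intro x hx
      apply cstar_approx x _ (mulSpan_isClosed _ _)
      intro n
      have hacc : star x * x * ccA (star x * x) n ∈ B (1 : G) :=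
        mul_ccA_mem hBe (haBe x hx) n
      have h1 : x * (star x * x * ccA (star x * x) n) ∈ B (r * s) := by
        simpa using hmul (r * s) 1 x (hXle hx) _ hacc
      have h2 : star x * x ∈ J s⁻¹ r⁻¹ := by
        rw [hJ s⁻¹ r⁻¹]
        exact mem_mulSpan (hstarX x hx)
          ⟨star x, hstarX x hx, star_star x⟩
      have key := mem_mulSpan (S := (B (r * s) : Set L))
        (T := (J s⁻¹ r⁻¹ : Set L)) h1 h2
      have heq : (x * (star x * x * ccA (star x * x) n)) * (star x * x)
          = x * (star x * x * (star x * x * ccA (star x * x) n)) := by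
        simp only [mul_assoc]
        rw [(commute_ccA (star x * x) n).symm.eq]
        simp only [mul_assoc]
      rwa [heq] at key
    · -- B (r*s) ⋅ J s⁻¹ r⁻¹ ≤ X
      refine mulSpan_le (mulSpan_isClosed _ _) ?_
      intro v hv u hu
      rw [hJ s⁻¹ r⁻¹] at hu
      have hu' : u ∈ closedSpan (Set.image2 (· * ·) (Y : Set L)
          (star '' (Y : Set L))) := hu
      have := clm_closedSpan (N := X) (mulSpan_isClosed _ _)
        (ContinuousLinearMap.mul ℂ L v) ?_ hu'
      · simpa using this
      rintro w ⟨p, hp, q, ⟨y, hy, rfl⟩, rfl⟩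
      simp only [ContinuousLinearMap.mul_apply']
      -- goal : v * (p * star y) ∈ X, with p y ∈ Y
      have hp' : p ∈ closedSpan (Set.image2 (· * ·) (B s⁻¹ : Set L) (B r⁻¹ : Set L)) := hp
      have := clm_closedSpan (N := X) (mulSpan_isClosed _ _)
        ((ContinuousLinearMap.mul ℂ L v).comp
          ((ContinuousLinearMap.mul ℂ L).flip (star y))) ?_ hp'
      · simpa only [ContinuousLinearMap.comp_apply, ContinuousLinearMap.flip_apply,
          ContinuousLinearMap.mul_apply'] using this
      rintro w ⟨c1, hc1, c2, hc2, rfl⟩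
      simp only [ContinuousLinearMap.comp_apply, ContinuousLinearMap.flip_apply,
        ContinuousLinearMap.mul_apply']
      -- goal : v * ((c1 * c2) * star y) ∈ X, with y ∈ Y
      have hy' : y ∈ closedSpan (Set.image2 (· * ·) (B s⁻¹ : Set L) (B r⁻¹ : Set L)) := hy
      have := star_clm_closedSpan (N := X) (mulSpan_isClosed _ _)
        (ContinuousLinearMap.mul ℂ L (v * (c1 * c2))) ?_ hy'
      · simpa only [ContinuousLinearMap.mul_apply', mul_assoc] using this
      rintro w ⟨d1, hd1, d2, hd2, rfl⟩
      simp only [ContinuousLinearMap.mul_apply', star_mul]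
      -- goal : (v * (c1 * c2)) * (star d2 * star d1) ∈ X
      have m1 : star d2 ∈ B r := by
        have := hstar r⁻¹ d2 hd2
        rwa [inv_inv] at this
      have m2 : star d1 ∈ B s := by
        have := hstar s⁻¹ d1 hd1
        rwa [inv_inv] at this
      have hin : v * (c1 * (c2 * star d2)) ∈ B r := by
        have t1 := hmul r⁻¹ r _ hc2 _ m1
        have t2 := hmul s⁻¹ (r⁻¹ * r) _ hc1 _ t1
        have t3 := hmul (r * s) (s⁻¹ * (r⁻¹ * r)) v hv _ t2
        rwa [show (r * s) * (s⁻¹ * (r⁻¹ * r)) = r by group] at t3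
      have := mem_mulSpan (S := (B r : Set L)) (T := (B s : Set L)) hin m2
      simpa only [mul_assoc] using this
end
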